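/- Let P(z) = Σ_{j=0}^n A_j z^j be a matrix polynomial with A_n invertible and at least three nonzero coefficients. Suppose k = ℓ, i.e., k is the smallest positive integer with A_{n-k} ≠ 0 and A_{n-2k} ≠ 0 is the next nonzero coefficient. Let ‖·‖ be a submultiplicative matrix norm with ‖A_n^{-2}‖^{-1} = ‖A_n‖‖A_n^{-1}‖^{-1}, and assume A_n commutes with A_{n-k} and A_{n-2k}. Define Q(z) = (A_n z^{2k} − A_{n-k} z^k − A_{n-2k} + A_{n-k}^2 A_n^{-1}) P(z). Then ρ[Q] ≤ ρ[P]. -/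

import Mathlib

/-- Coefficients of the product of two matrix polynomials given by their
coefficient sequences (Cauchy product). -/
noncomputable def Qcoeff {m : ℕ} (T A : ℕ → Matrix (Fin m) (Fin m) ℂ) (j : ℕ) :
    Matrix (Fin m) (Fin m) ℂ :=
  ∑ i ∈ Finset.range (j + 1), T i * A (j - i)

/-- Coefficients of the multiplier `Aₙ z^{2k} - A_{n-k} z^k - A_{n-2k} + A_{n-k}² Aₙ⁻¹`. -/
noncomputable def mult3 {m : ℕ} (A : ℕ → Matrix (Fin m) (Fin m) ℂ) (n k : ℕ) (i : ℕ) :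
    Matrix (Fin m) (Fin m) ℂ :=
  if i = 2 * k then A n else if i = k then -A (n - k)
    else if i = 0 then A (n - k) * A (n - k) * (A n)⁻¹ - A (n - 2 * k) else 0

set_option maxHeartbeats 1600000 in
/-- Case `ℓ = k`:
`ρ[(Aₙ z^{2k} - A_{n-k} z^k - A_{n-2k} + A_{n-k}² Aₙ⁻¹) P(z)] ≤ ρ[P]` under the norm and
commutation assumptions of Theorem 2.1. -/
theorem matrix_improved_cauchy_radius_Q3 {m : ℕ}
    (n : ℕ) (A : ℕ → Matrix (Fin m) (Fin m) ℂ)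
    (hdeg : ∀ j, n < j → A j = 0) (hinv : IsUnit (A n))
    (k : ℕ) (hk : 0 < k) (hkl : 2 * k ≤ n)
    (hknz : A (n - k) ≠ 0) (hkmin : ∀ j, 0 < j → j < k → A (n - j) = 0)
    (hlnz : A (n - 2 * k) ≠ 0) (hlmin : ∀ j, 0 < j → j < k → A (n - k - j) = 0)
    (N : Matrix (Fin m) (Fin m) ℂ → ℝ)
    (hN0 : ∀ M, N M = 0 ↔ M = 0)
    (hNsmul : ∀ (c : ℂ) M, N (c • M) = ‖c‖ * N M)
    (hNadd : ∀ M₁ M₂, N (M₁ + M₂) ≤ N M₁ + N M₂)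
    (hNmul : ∀ M₁ M₂, N (M₁ * M₂) ≤ N M₁ * N M₂)
    (hNsq : (N ((A n)⁻¹ * (A n)⁻¹))⁻¹ = N (A n) * (N (A n)⁻¹)⁻¹)
    (hcomm1 : A n * A (n - k) = A (n - k) * A n)
    (hcomm2 : A n * A (n - 2 * k) = A (n - 2 * k) * A n)
    (x y : ℝ) (hx : 0 < x) (hy : 0 < y)
    (hxroot : (N ((A n * A n))⁻¹)⁻¹ * x ^ (n + 2 * k)
      = ∑ j ∈ Finset.range (n + 2 * k), N (Qcoeff (mult3 A n k) A j) * x ^ j)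
    (hyroot : (N (A n)⁻¹)⁻¹ * y ^ n = ∑ j ∈ Finset.range n, N (A j) * y ^ j) :
    x ≤ y := by
  -- basic positivity facts about the norm
  have hm : 0 < m := by
    rcases Nat.eq_zero_or_pos m with hm0 | hm
    · exfalso; apply hknz; subst hm0; ext i j; exact i.elim0
    · exact hm
  have hNzero : N 0 = 0 := (hN0 0).mpr rfl
  have hNneg : ∀ M, N (-M) = N M := by
    intro M
    have h := hNsmul (-1) M
    simpa using h
  have hNnonneg : ∀ M, 0 ≤ N M := by
    intro M
    have h1 : N (M + (-M)) ≤ N M + N (-M) := hNadd M (-M)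
    rw [add_neg_cancel, hNzero, hNneg] at h1
    linarith
  have hNpos : ∀ M, M ≠ 0 → 0 < N M :=
    fun M hM => lt_of_le_of_ne (hNnonneg M) (fun h => hM ((hN0 M).mp h.symm))
  -- invertibility facts
  have hdet : IsUnit (A n).det := (Matrix.isUnit_iff_isUnit_det _).mp hinv
  have hAninv : (A n)⁻¹ * A n = 1 := Matrix.nonsing_inv_mul _ hdet
  have hone : (1 : Matrix (Fin m) (Fin m) ℂ) ≠ 0 := by
    intro h
    have h2 := congrFun (congrFun h ⟨0, hm⟩) ⟨0, hm⟩
    rw [Matrix.one_apply_eq] at h2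
    simpa using h2
  have hinvne : (A n)⁻¹ ≠ 0 := by
    intro h
    apply hone
    rw [← hAninv, h, Matrix.zero_mul]
  have hiine : (A n)⁻¹ * (A n)⁻¹ ≠ 0 := by
    intro h
    apply hone
    have : ((A n)⁻¹ * (A n)⁻¹) * (A n * A n) = 1 := by
      rw [Matrix.mul_assoc, ← Matrix.mul_assoc ((A n)⁻¹) (A n), hAninv, Matrix.one_mul, hAninv]
    rw [← this, h, Matrix.zero_mul]
  -- abbreviations
  set a : ℝ := N (A (n - k)) with ha_def
  set b : ℝ := N (A (n - 2 * k)) with hb_def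
  set cA : ℝ := N (A n) with hcA_def
  set ci : ℝ := N ((A n)⁻¹) with hci_def
  have hcipos : 0 < ci := hNpos _ hinvne
  have hcpos : 0 < ci⁻¹ := inv_pos.mpr hcipos
  have hcApos : 0 < cA := hNpos _ (by intro h; apply hinvne; rw [Matrix.nonsing_inv_eq_ringInverse, h]; simp)
  have hapos : 0 < a := hNpos _ hknz
  have hbpos : 0 < b := hNpos _ hlnz
  -- c ≤ cA
  have honele : (1 : ℝ) ≤ cA * ci := by
    have h1 := hNmul (A n) ((A n)⁻¹)
    rw [Matrix.mul_nonsing_inv _ hdet] at h1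
    have h2 : 0 < N (1 : Matrix (Fin m) (Fin m) ℂ) := hNpos _ hone
    have h3 := hNmul (1 : Matrix (Fin m) (Fin m) ℂ) 1
    rw [Matrix.one_mul] at h3
    nlinarith
  have hcle : ci⁻¹ ≤ cA := by
    have hci1 : ci * ci⁻¹ = 1 := mul_inv_cancel₀ hcipos.ne'
    nlinarith [honele, hcpos.le, hci1]
  -- the leading coefficient of Q
  have hlead : (N ((A n * A n))⁻¹)⁻¹ = cA * ci⁻¹ := by
    rw [Matrix.mul_inv_rev, hNsq]
  -- T0
  set T0 : Matrix (Fin m) (Fin m) ℂ := A (n - k) * A (n - k) * (A n)⁻¹ - A (n - 2 * k) with hT0_def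
  have hT0bound : N T0 ≤ a * a * ci + b := by
    have h1 : N T0 ≤ N (A (n - k) * A (n - k) * (A n)⁻¹) + N (-(A (n - 2 * k))) := by
      rw [hT0_def, sub_eq_add_neg]
      exact hNadd _ _
    rw [hNneg] at h1
    have h2 := hNmul (A (n - k) * A (n - k)) ((A n)⁻¹)
    have h3 := hNmul (A (n - k)) (A (n - k))
    have h4 : N (A (n - k) * A (n - k)) * N ((A n)⁻¹) ≤ a * a * ci := by
      have := hNnonneg ((A n)⁻¹)
      nlinarith
    calc N T0 ≤ N (A (n - k) * A (n - k) * (A n)⁻¹) + b := h1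
      _ ≤ N (A (n - k) * A (n - k)) * N ((A n)⁻¹) + b := by linarith [hNmul (A (n-k) * A (n-k)) ((A n)⁻¹)]
      _ ≤ a * a * ci + b := by linarith
  -- formula for the Q coefficients
  have hQ : ∀ j, Qcoeff (mult3 A n k) A j =
      (if 2 * k ≤ j then A n * A (j - 2 * k) else 0)
      + (if k ≤ j then -(A (n - k) * A (j - k)) else 0)
      + T0 * A j := by
    intro j
    unfold Qcoeff
    have hpt : ∀ i ∈ Finset.range (j + 1), mult3 A n k i * A (j - i)
        = (if i = 2 * k then A n * A (j - 2 * k) else 0)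
        + (if i = k then -(A (n - k) * A (j - k)) else 0)
        + (if i = 0 then T0 * A j else 0) := by
      intro i _
      unfold mult3
      rcases eq_or_ne i (2 * k) with h2 | h2
      · subst h2
        rw [if_pos rfl, if_pos rfl, if_neg (by omega), if_neg (by omega)]
        simp
      rcases eq_or_ne i k with h1 | h1
      · subst h1
        rw [if_neg h2, if_pos rfl, if_neg h2, if_pos rfl, if_neg (by omega)]
        simp
      rcases eq_or_ne i 0 with h0 | h0
      · subst h0
        rw [if_neg h2, if_neg h1, if_pos rfl, if_neg h2, if_neg h1, if_pos rfl]
        simp [hT0_def]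
      · rw [if_neg h2, if_neg h1, if_neg h0, if_neg h2, if_neg h1, if_neg h0]
        simp
    rw [Finset.sum_congr rfl hpt, Finset.sum_add_distrib, Finset.sum_add_distrib,
      Finset.sum_ite_eq', Finset.sum_ite_eq', Finset.sum_ite_eq']
    simp only [Finset.mem_range, Nat.lt_succ_iff]
    rw [if_pos (Nat.zero_le j)]
  -- vanishing of the middle coefficients
  have hQzero : ∀ j, n ≤ j → j < n + 2 * k → Qcoeff (mult3 A n k) A j = 0 := by
    intro j hj1 hj2
    rw [hQ, if_pos (by omega), if_pos (by omega)]
    obtain ⟨d, rfl⟩ : ∃ d, j = n + d := ⟨j - n, by omega⟩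
    rcases Nat.eq_zero_or_pos d with rfl | hdpos
    · -- j = n
      rw [show n + 0 - 2 * k = n - 2 * k from by omega, show n + 0 - k = n - k from by omega,
        show n + 0 = n from by omega,
        hT0_def, sub_mul, Matrix.mul_assoc, hAninv, Matrix.mul_one, ← hcomm2]
      abel
    · -- n < j
      have hAj : A (n + d) = 0 := hdeg _ (by omega)
      rw [hAj, Matrix.mul_zero, add_zero]
      rcases lt_trichotomy d k with hr | hr | hr
      · rw [show n + d - 2 * k = n - k - (k - d) from by omega,
          show n + d - k = n - (k - d) from by omega,
          hlmin (k - d) (by omega) (by omega), hkmin (k - d) (by omega) (by omega)]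
        simp
      · rw [show n + d - 2 * k = n - k from by omega, show n + d - k = n from by omega,
          hcomm1]
        abel
      · rw [show n + d - 2 * k = n - (2 * k - d) from by omega,
          hdeg (n + d - k) (by omega), hkmin (2 * k - d) (by omega) (by omega)]
        simp
  -- partial sums of the original polynomial
  have hsum2k : ∑ i ∈ Finset.range (n - 2 * k), N (A i) * y ^ i
      = ci⁻¹ * y ^ n - a * y ^ (n - k) - b * y ^ (n - 2 * k) := by
    have hsplit : ∑ i ∈ Finset.range (n - 2 * k), N (A i) * y ^ i
        + ∑ i ∈ Finset.Ico (n - 2 * k) n, N (A i) * y ^ i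
        = ∑ i ∈ Finset.range n, N (A i) * y ^ i := by
      simp only [Finset.range_eq_Ico]
      exact Finset.sum_Ico_consecutive _ (Nat.zero_le _) (by omega)
    have hmid : ∑ i ∈ Finset.Ico (n - 2 * k) n, N (A i) * y ^ i
        = a * y ^ (n - k) + b * y ^ (n - 2 * k) := by
      have hpt : ∀ i ∈ Finset.Ico (n - 2 * k) n, N (A i) * y ^ i
          = (if i = n - k then a * y ^ (n - k) else 0)
          + (if i = n - 2 * k then b * y ^ (n - 2 * k) else 0) := by
        intro i hi
        rw [Finset.mem_Ico] at hi
        rcases eq_or_ne i (n - k) with h1 | h1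
        · subst h1
          rw [if_pos rfl, if_neg (by omega), add_zero]
        rcases eq_or_ne i (n - 2 * k) with h2 | h2
        · subst h2
          rw [if_neg h1, if_pos rfl, zero_add]
        · rw [if_neg h1, if_neg h2, add_zero]
          have hAi : A i = 0 := by
            rcases lt_trichotomy (n - i) k with hd | hd | hd
            · have : i = n - (n - i) := by omega
              rw [this]
              exact hkmin _ (by omega) (by omega)
            · omega
            · have : i = n - k - (n - i - k) := by omega
              rw [this]
              exact hlmin _ (by omega) (by omega)
          rw [hAi, hNzero, zero_mul]
      rw [Finset.sum_congr rfl hpt, Finset.sum_add_distrib,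
        Finset.sum_ite_eq', Finset.sum_ite_eq',
        if_pos (by rw [Finset.mem_Ico]; omega), if_pos (by rw [Finset.mem_Ico]; omega)]
    rw [← hyroot] at hsplit
    linarith [hsplit, hmid]
  have hsumk : ∑ i ∈ Finset.range (n - k), N (A i) * y ^ i
      = ci⁻¹ * y ^ n - a * y ^ (n - k) := by
    have hsplit : ∑ i ∈ Finset.range (n - k), N (A i) * y ^ i
        + ∑ i ∈ Finset.Ico (n - k) n, N (A i) * y ^ i
        = ∑ i ∈ Finset.range n, N (A i) * y ^ i := by
      simp only [Finset.range_eq_Ico]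
      exact Finset.sum_Ico_consecutive _ (Nat.zero_le _) (by omega)
    have hmid : ∑ i ∈ Finset.Ico (n - k) n, N (A i) * y ^ i = a * y ^ (n - k) := by
      have hpt : ∀ i ∈ Finset.Ico (n - k) n, N (A i) * y ^ i
          = (if i = n - k then a * y ^ (n - k) else 0) := by
        intro i hi
        rw [Finset.mem_Ico] at hi
        rcases eq_or_ne i (n - k) with h1 | h1
        · subst h1; rw [if_pos rfl]
        · rw [if_neg h1]
          have hAi : A i = 0 := by
            have : i = n - (n - i) := by omega
            rw [this]
            exact hkmin _ (by omega) (by omega)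
          rw [hAi, hNzero, zero_mul]
      rw [Finset.sum_congr rfl hpt, Finset.sum_ite_eq',
        if_pos (by rw [Finset.mem_Ico]; omega)]
    rw [← hyroot] at hsplit
    linarith [hsplit, hmid]
  -- the key inequality : Q evaluated at y
  have hkey : ∑ j ∈ Finset.range (n + 2 * k), N (Qcoeff (mult3 A n k) A j) * y ^ j
      ≤ (cA * ci⁻¹) * y ^ (n + 2 * k) := by
    -- first drop the vanishing middle part
    have hdrop : ∑ j ∈ Finset.range (n + 2 * k), N (Qcoeff (mult3 A n k) A j) * y ^ j
        = ∑ j ∈ Finset.range n, N (Qcoeff (mult3 A n k) A j) * y ^ j := by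
      have hsplit : ∑ j ∈ Finset.range n, N (Qcoeff (mult3 A n k) A j) * y ^ j
          + ∑ j ∈ Finset.Ico n (n + 2 * k), N (Qcoeff (mult3 A n k) A j) * y ^ j
          = ∑ j ∈ Finset.range (n + 2 * k), N (Qcoeff (mult3 A n k) A j) * y ^ j := by
        simp only [Finset.range_eq_Ico]
        exact Finset.sum_Ico_consecutive _ (Nat.zero_le _) (by omega)
      have hz : ∑ j ∈ Finset.Ico n (n + 2 * k), N (Qcoeff (mult3 A n k) A j) * y ^ j = 0 := by
        apply Finset.sum_eq_zero
        intro j hj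
        rw [Finset.mem_Ico] at hj
        rw [hQzero j hj.1 hj.2, hNzero, zero_mul]
      linarith [hsplit, hz]
    rw [hdrop]
    -- bound each coefficient
    have htb : ∀ j ∈ Finset.range n, N (Qcoeff (mult3 A n k) A j) * y ^ j
        ≤ (if 2 * k ≤ j then cA * N (A (j - 2 * k)) * y ^ j else 0)
        + (if k ≤ j then a * N (A (j - k)) * y ^ j else 0)
        + N T0 * N (A j) * y ^ j := by
      intro j _
      have hyj : (0:ℝ) < y ^ j := pow_pos hy j
      have hcb : N (Qcoeff (mult3 A n k) A j)
          ≤ (if 2 * k ≤ j then cA * N (A (j - 2 * k)) else 0)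
          + (if k ≤ j then a * N (A (j - k)) else 0)
          + N T0 * N (A j) := by
        rw [hQ]
        have h1 := hNadd ((if 2 * k ≤ j then A n * A (j - 2 * k) else 0)
            + (if k ≤ j then -(A (n - k) * A (j - k)) else 0)) (T0 * A j)
        have h2 := hNadd (if 2 * k ≤ j then A n * A (j - 2 * k) else 0)
            (if k ≤ j then -(A (n - k) * A (j - k)) else 0)
        have h3 : N (if 2 * k ≤ j then A n * A (j - 2 * k) else 0)
            ≤ (if 2 * k ≤ j then cA * N (A (j - 2 * k)) else 0) := by
          split_ifs
          · exact hNmul _ _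
          · rw [hNzero]
        have h4 : N (if k ≤ j then -(A (n - k) * A (j - k)) else 0)
            ≤ (if k ≤ j then a * N (A (j - k)) else 0) := by
          split_ifs
          · rw [hNneg]; exact hNmul _ _
          · rw [hNzero]
        have h5 := hNmul T0 (A j)
        linarith
      have := mul_le_mul_of_nonneg_right hcb hyj.le
      calc N (Qcoeff (mult3 A n k) A j) * y ^ j
          ≤ ((if 2 * k ≤ j then cA * N (A (j - 2 * k)) else 0)
            + (if k ≤ j then a * N (A (j - k)) else 0)
            + N T0 * N (A j)) * y ^ j := this
        _ = (if 2 * k ≤ j then cA * N (A (j - 2 * k)) * y ^ j else 0)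
            + (if k ≤ j then a * N (A (j - k)) * y ^ j else 0)
            + N T0 * N (A j) * y ^ j := by
          split_ifs <;> ring
    have hle1 := Finset.sum_le_sum htb
    -- compute the three sums
    have hs1 : ∑ j ∈ Finset.range n, (if 2 * k ≤ j then cA * N (A (j - 2 * k)) * y ^ j else 0)
        = cA * y ^ (2 * k) * (∑ i ∈ Finset.range (n - 2 * k), N (A i) * y ^ i) := by
      have hsplit : ∑ j ∈ Finset.range (2 * k), (if 2 * k ≤ j then cA * N (A (j - 2 * k)) * y ^ j else 0)
          + ∑ j ∈ Finset.Ico (2 * k) n, (if 2 * k ≤ j then cA * N (A (j - 2 * k)) * y ^ j else 0)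
          = ∑ j ∈ Finset.range n, (if 2 * k ≤ j then cA * N (A (j - 2 * k)) * y ^ j else 0) := by
        simp only [Finset.range_eq_Ico]
        exact Finset.sum_Ico_consecutive _ (Nat.zero_le _) hkl
      have hz : ∑ j ∈ Finset.range (2 * k), (if 2 * k ≤ j then cA * N (A (j - 2 * k)) * y ^ j else 0) = 0 := by
        apply Finset.sum_eq_zero
        intro j hj
        rw [Finset.mem_range] at hj
        rw [if_neg (by omega)]
      have hrest : ∑ j ∈ Finset.Ico (2 * k) n, (if 2 * k ≤ j then cA * N (A (j - 2 * k)) * y ^ j else 0)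
          = ∑ i ∈ Finset.range (n - 2 * k), cA * N (A i) * y ^ (2 * k + i) := by
        rw [Finset.sum_Ico_eq_sum_range]
        apply Finset.sum_congr rfl
        intro i _
        rw [if_pos (by omega), show 2 * k + i - 2 * k = i from by omega]
      rw [← hsplit, hz, zero_add, hrest, Finset.mul_sum]
      apply Finset.sum_congr rfl
      intro i _
      rw [pow_add]
      ring
    have hs2 : ∑ j ∈ Finset.range n, (if k ≤ j then a * N (A (j - k)) * y ^ j else 0)
        = a * y ^ k * (∑ i ∈ Finset.range (n - k), N (A i) * y ^ i) := by
      have hsplit : ∑ j ∈ Finset.range k, (if k ≤ j then a * N (A (j - k)) * y ^ j else 0)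
          + ∑ j ∈ Finset.Ico k n, (if k ≤ j then a * N (A (j - k)) * y ^ j else 0)
          = ∑ j ∈ Finset.range n, (if k ≤ j then a * N (A (j - k)) * y ^ j else 0) := by
        simp only [Finset.range_eq_Ico]
        exact Finset.sum_Ico_consecutive _ (Nat.zero_le _) (by omega)
      have hz : ∑ j ∈ Finset.range k, (if k ≤ j then a * N (A (j - k)) * y ^ j else 0) = 0 := by
        apply Finset.sum_eq_zero
        intro j hj
        rw [Finset.mem_range] at hj
        rw [if_neg (by omega)]
      have hrest : ∑ j ∈ Finset.Ico k n, (if k ≤ j then a * N (A (j - k)) * y ^ j else 0)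
          = ∑ i ∈ Finset.range (n - k), a * N (A i) * y ^ (k + i) := by
        rw [Finset.sum_Ico_eq_sum_range]
        apply Finset.sum_congr rfl
        intro i _
        rw [if_pos (by omega), show k + i - k = i from by omega]
      rw [← hsplit, hz, zero_add, hrest, Finset.mul_sum]
      apply Finset.sum_congr rfl
      intro i _
      rw [pow_add]
      ring
    have hs3 : ∑ j ∈ Finset.range n, N T0 * N (A j) * y ^ j
        = N T0 * (ci⁻¹ * y ^ n) := by
      rw [hyroot, Finset.mul_sum]
      apply Finset.sum_congr rfl
      intro i _
      ring
    rw [Finset.sum_add_distrib, Finset.sum_add_distrib, hs1, hs2, hs3, hsum2k, hsumk] at hle1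
    -- now an algebraic inequality
    have e1 : y ^ (2 * k) * y ^ (n - k) = y ^ (n + k) := by
      rw [← pow_add]; congr 1; omega
    have e2 : y ^ (2 * k) * y ^ (n - 2 * k) = y ^ n := by
      rw [← pow_add]; congr 1; omega
    have e3 : y ^ k * y ^ (n - k) = y ^ n := by
      rw [← pow_add]; congr 1; omega
    have e4 : y ^ (2 * k) * y ^ n = y ^ (n + 2 * k) := by
      rw [← pow_add]; congr 1; omega
    have e5 : y ^ k * y ^ n = y ^ (n + k) := by
      rw [← pow_add]; congr 1; omega
    have hyn : (0:ℝ) < y ^ n := pow_pos hy n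
    have hynk : (0:ℝ) < y ^ (n + k) := pow_pos hy _
    have ht0c : N T0 * ci⁻¹ ≤ a * a + b * ci⁻¹ := by
      have h1 : N T0 * ci⁻¹ ≤ (a * a * ci + b) * ci⁻¹ :=
        mul_le_mul_of_nonneg_right hT0bound hcpos.le
      have h2 : ci * ci⁻¹ = 1 := mul_inv_cancel₀ hcipos.ne'
      have h3 : (a * a * ci + b) * ci⁻¹ = a * a * (ci * ci⁻¹) + b * ci⁻¹ := by ring
      rw [h2, mul_one] at h3
      linarith
    have ht0c2 : N T0 * ci⁻¹ ≤ a * a + b * cA := by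
      have h4 : b * ci⁻¹ ≤ b * cA := mul_le_mul_of_nonneg_left hcle hbpos.le
      linarith
    have hfin : cA * y ^ (2 * k) * (ci⁻¹ * y ^ n - a * y ^ (n - k) - b * y ^ (n - 2 * k))
        + a * y ^ k * (ci⁻¹ * y ^ n - a * y ^ (n - k))
        + N T0 * (ci⁻¹ * y ^ n)
        ≤ (cA * ci⁻¹) * y ^ (n + 2 * k) := by
      have expand : cA * y ^ (2 * k) * (ci⁻¹ * y ^ n - a * y ^ (n - k) - b * y ^ (n - 2 * k))
          = cA * ci⁻¹ * y ^ (n + 2 * k) - cA * a * y ^ (n + k) - cA * b * y ^ n := by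
        rw [mul_sub, mul_sub]
        rw [show cA * y ^ (2 * k) * (ci⁻¹ * y ^ n) = cA * ci⁻¹ * (y ^ (2 * k) * y ^ n) by ring, e4]
        rw [show cA * y ^ (2 * k) * (a * y ^ (n - k)) = cA * a * (y ^ (2 * k) * y ^ (n - k)) by ring, e1]
        rw [show cA * y ^ (2 * k) * (b * y ^ (n - 2 * k)) = cA * b * (y ^ (2 * k) * y ^ (n - 2 * k)) by ring, e2]
      have expand2 : a * y ^ k * (ci⁻¹ * y ^ n - a * y ^ (n - k))
          = a * ci⁻¹ * y ^ (n + k) - a * a * y ^ n := by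
        rw [mul_sub]
        rw [show a * y ^ k * (ci⁻¹ * y ^ n) = a * ci⁻¹ * (y ^ k * y ^ n) by ring, e5]
        rw [show a * y ^ k * (a * y ^ (n - k)) = a * a * (y ^ k * y ^ (n - k)) by ring, e3]
      rw [expand, expand2]
      have hA : a * ci⁻¹ * y ^ (n + k) ≤ cA * a * y ^ (n + k) := by
        have h := mul_le_mul_of_nonneg_right
          (mul_le_mul_of_nonneg_left hcle hapos.le) hynk.le
        have h2 : a * cA * y ^ (n + k) = cA * a * y ^ (n + k) := by ring
        linarith
      have hB : N T0 * (ci⁻¹ * y ^ n) ≤ (a * a + b * cA) * y ^ n := by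
        have h := mul_le_mul_of_nonneg_right ht0c2 hyn.le
        have h2 : N T0 * (ci⁻¹ * y ^ n) = N T0 * ci⁻¹ * y ^ n := by ring
        linarith
      have hExp : (a * a + b * cA) * y ^ n = a * a * y ^ n + cA * b * y ^ n := by ring
      linarith [hA, hB, hExp]
    linarith [hle1, hfin]
  -- endgame: monotonicity argument
  by_contra hxy
  push_neg at hxy
  have hd : 1 ≤ x / y := by
    rw [le_div_iff₀ hy]
    linarith
  set M := n + 2 * k - 1 with hM_def
  have hM1 : n + 2 * k = M + 1 := by omega
  have hcpos' : 0 < cA * ci⁻¹ := mul_pos hcApos hcpos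
  have hstep : ∀ j ∈ Finset.range (n + 2 * k),
      N (Qcoeff (mult3 A n k) A j) * x ^ j
      ≤ (x / y) ^ M * (N (Qcoeff (mult3 A n k) A j) * y ^ j) := by
    intro j hj
    rw [Finset.mem_range] at hj
    have h1 : x ^ j = (x / y) ^ j * y ^ j := by
      rw [div_pow, div_mul_cancel₀ _ (pow_ne_zero j hy.ne')]
    have h2 : (x / y) ^ j ≤ (x / y) ^ M := pow_le_pow_right₀ hd (by omega)
    have h3 : 0 ≤ N (Qcoeff (mult3 A n k) A j) * y ^ j :=
      mul_nonneg (hNnonneg _) (pow_pos hy j).le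
    calc N (Qcoeff (mult3 A n k) A j) * x ^ j
        = (x / y) ^ j * (N (Qcoeff (mult3 A n k) A j) * y ^ j) := by rw [h1]; ring
      _ ≤ (x / y) ^ M * (N (Qcoeff (mult3 A n k) A j) * y ^ j) := by
          apply mul_le_mul_of_nonneg_right h2 h3
  have hchain : (cA * ci⁻¹) * x ^ (n + 2 * k)
      ≤ (x / y) ^ M * ((cA * ci⁻¹) * y ^ (n + 2 * k)) := by
    rw [hlead] at hxroot
    rw [hxroot]
    calc ∑ j ∈ Finset.range (n + 2 * k), N (Qcoeff (mult3 A n k) A j) * x ^ j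
        ≤ ∑ j ∈ Finset.range (n + 2 * k), (x / y) ^ M * (N (Qcoeff (mult3 A n k) A j) * y ^ j) :=
          Finset.sum_le_sum hstep
      _ = (x / y) ^ M * ∑ j ∈ Finset.range (n + 2 * k), N (Qcoeff (mult3 A n k) A j) * y ^ j := by
          rw [Finset.mul_sum]
      _ ≤ (x / y) ^ M * ((cA * ci⁻¹) * y ^ (n + 2 * k)) := by
          apply mul_le_mul_of_nonneg_left hkey
          positivity
  have hrhs : (x / y) ^ M * ((cA * ci⁻¹) * y ^ (n + 2 * k)) = (cA * ci⁻¹) * (x ^ M * y) := by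
    rw [hM1, div_pow, pow_succ]
    field_simp
  rw [hrhs, hM1] at hchain
  rw [pow_succ] at hchain
  have hxM : (0:ℝ) < x ^ M := pow_pos hx M
  have : x ≤ y := by
    have h := (mul_le_mul_iff_of_pos_left hcpos').mp hchain
    have h2 := (mul_le_mul_iff_of_pos_left hxM).mp (by linarith [h] : x ^ M * x ≤ x ^ M * y)
    exact h2
  linarith
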